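/- In a DAG G with topological ordering π, any two non-adjacent vertices π(i) and π(j) with i < j are d-separated by the set {π(1),...,π(j-1)} \ {π(i)} (i.e., by all predecessors of π(j) other than π(i)). -/

import Mathlib

open scoped Classical

/-- A directed acyclic graph on `Fin p`: a finite edge set together with a
topological ordering witnessing acyclicity. -/
structure DAG (p : ℕ) where
  edges : Finset (Fin p × Fin p)
  acyclic : ∃ σ : Equiv.Perm (Fin p), ∀ e ∈ edges, σ.symm e.1 < σ.symm e.2

namespace DAG

variable {p : ℕ}

def edgeRel (G : DAG p) (a b : Fin p) : Prop := (a, b) ∈ G.edges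

/-- adjacency in the skeleton -/
def adj (G : DAG p) (a b : Fin p) : Prop := (a, b) ∈ G.edges ∨ (b, a) ∈ G.edges

/-- the skeleton as a finite set of unordered pairs -/
def skeleton (G : DAG p) : Finset (Sym2 (Fin p)) := G.edges.image (fun e => s(e.1, e.2))

/-- `b` is a collider on a path segment `a - b - c`. -/
def isCollider (G : DAG p) (a b c : Fin p) : Prop := (a, b) ∈ G.edges ∧ (c, b) ∈ G.edges

/-- `b` is in `S` or an ancestor of some element of `S`. -/
def ancestorOfSet (G : DAG p) (b : Fin p) (S : Finset (Fin p)) : Prop :=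
  ∃ s ∈ S, Relation.ReflTransGen G.edgeRel b s

/-- a (simple, undirected) path from `i` to `j` in the skeleton, as a list of vertices -/
def IsTrail (G : DAG p) (i j : Fin p) (l : List (Fin p)) : Prop :=
  l.Chain' G.adj ∧ l.Nodup ∧ 2 ≤ l.length ∧ l.head? = some i ∧ l.getLast? = some j

/-- the path `l` d-connects its endpoints given `S`: every collider on it is in `S` or
has a descendant in `S`, and every non-collider on it is not in `S`. -/
def dConnectsPath (G : DAG p) (S : Finset (Fin p)) (l : List (Fin p)) : Prop :=
  ∀ a b c : Fin p, [a, b, c] <:+: l →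
    (G.isCollider a b c → G.ancestorOfSet b S) ∧ (¬ G.isCollider a b c → b ∉ S)

def dConnected (G : DAG p) (i j : Fin p) (S : Finset (Fin p)) : Prop :=
  ∃ l : List (Fin p), G.IsTrail i j l ∧ G.dConnectsPath S l

def dSep (G : DAG p) (i j : Fin p) (S : Finset (Fin p)) : Prop :=
  i ≠ j ∧ ¬ G.dConnected i j S

end DAG

/-- A (pairwise) conditional independence model: `CI i j S` means
`X_i ⫫ X_j | X_S`. -/
abbrev CIModel (p : ℕ) := Fin p → Fin p → Finset (Fin p) → Prop

variable {p : ℕ}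

/-- `G` is Markov w.r.t. the CI model: every d-separation is a CI statement. -/
def Markov (G : DAG p) (CI : CIModel p) : Prop :=
  ∀ i j S, G.dSep i j S → CI i j S

/-- Markov equivalence: same d-separation statements. -/
def MarkovEquiv (G G' : DAG p) : Prop :=
  ∀ i j S, G.dSep i j S ↔ G'.dSep i j S

/-- `π` is a topological ordering of `G`. -/
def IsTopOrder (G : DAG p) (π : Equiv.Perm (Fin p)) : Prop :=
  ∀ e ∈ G.edges, π.symm e.1 < π.symm e.2

/-- the predecessors `{π 0, …, π (k-1)}` of position `k` in the ordering `π` -/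
def predSet (π : Equiv.Perm (Fin p)) (k : Fin p) : Finset (Fin p) :=
  (Finset.univ.filter (fun m => m < k)).image π

/-- The minimal I-map `G_π`: for `j < k` there is an edge `π j → π k` iff
`π j` and `π k` are conditionally dependent given all other predecessors of `π k`. -/
noncomputable def minimalIMap (CI : CIModel p) (π : Equiv.Perm (Fin p)) : DAG p where
  edges := Finset.univ.filter (fun q : Fin p × Fin p =>
    ∃ j k : Fin p, j < k ∧ q = (π j, π k) ∧ ¬ CI (π j) (π k) ((predSet π k).erase (π j)))
  acyclic := ⟨π, by
    intro e he
    rw [Finset.mem_filter] at he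
    obtain ⟨-, j, k, hjk, rfl, -⟩ := he
    simpa using hjk⟩

/-- the minimal number of edges of a minimal I-map `G_π` over all permutations `π` -/
noncomputable def spScore (CI : CIModel p) : ℕ :=
  ((Finset.univ : Finset (Equiv.Perm (Fin p))).image
    (fun π => (minimalIMap CI π).edges.card)).min' (Finset.univ_nonempty.image _)

/-- adjacency-faithfulness: endpoints of edges of `G` are conditionally dependent
given any conditioning set. -/
def AdjFaithful (G : DAG p) (CI : CIModel p) : Prop :=
  ∀ e ∈ G.edges, ∀ S : Finset (Fin p), e.1 ∉ S → e.2 ∉ S →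
    ¬ CI e.1 e.2 S ∧ ¬ CI e.2 e.1 S

/-- the sparsest Markov representation assumption -/
def SMR (G : DAG p) (CI : CIModel p) : Prop :=
  Markov G CI ∧
    ∀ G' : DAG p, Markov G' CI → ¬ MarkovEquiv G' G → G.edges.card < G'.edges.card

/-- the set of d-separation statements of `G` -/
def DsepSet (G : DAG p) : Set (Fin p × Fin p × Finset (Fin p)) :=
  {t | G.dSep t.1 t.2.1 t.2.2}

/-- P-minimality: no Markov DAG entails strictly more d-separations. -/
def PMinimal (G : DAG p) (CI : CIModel p) : Prop :=
  ∀ G' : DAG p, Markov G' CI → ¬ (DsepSet G ⊂ DsepSet G')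


/-- In a DAG `G` with topological ordering `π`, any two non-adjacent vertices
`π i` and `π j` with `i < j` are d-separated by the set of all predecessors of
`π j` other than `π i`. -/
theorem dSep_of_nonadjacent_predecessors (G : DAG p) (π : Equiv.Perm (Fin p))
    (htop : IsTopOrder G π) (i j : Fin p) (hij : i < j)
    (hnadj : ¬ G.adj (π i) (π j)) :
    G.dSep (π i) (π j) ((predSet π j).erase (π i)) := by
  classical
  constructor
  · exact fun h => absurd (π.injective h) hij.ne
  rintro ⟨l, ⟨hchain, hnodup, hlen2, hhead, hlast⟩, hconn⟩
  set S := (predSet π j).erase (π i) with hSdef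
  have hlnil : l ≠ [] := by intro h; rw [h] at hlen2; simp at hlen2
  -- length ≥ 3
  have hN : 3 ≤ l.length := by
    by_contra h
    have h2 : l.length = 2 := by omega
    obtain ⟨a, b, rfl⟩ := List.length_eq_two.mp h2
    simp at hhead hlast
    subst hhead; subst hlast
    exact hnadj (List.isChain_pair.mp hchain)
  set v : ℕ → Fin p := fun k => l.getD k (π j) with hvdef
  have hvget : ∀ (k : ℕ) (h : k < l.length), v k = l[k] := fun k h => l.getD_eq_getElem _ h
  have hv0 : v 0 = π i := by
    rw [hvget 0 (by omega), List.getElem_zero (by omega)]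
    have := List.head?_eq_head hlnil
    rw [hhead] at this
    exact (Option.some_injective _ this).symm
  have hvlast : v (l.length - 1) = π j := by
    rw [hvget _ (by omega), ← List.getLast_eq_getElem hlnil]
    have := List.getLast?_eq_getLast hlnil
    rw [hlast] at this
    exact (Option.some_injective _ this).symm
  have hadj : ∀ k, k + 1 < l.length → G.adj (v k) (v (k+1)) := by
    intro k h
    have h2 := List.isChain_iff_getElem.mp hchain k (by omega)
    rwa [← hvget k (by omega), ← hvget (k+1) (by omega)] at h2
  have hne_idx : ∀ a b, a < l.length → b < l.length → v a = v b → a = b := by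
    intro a b ha hb h
    rw [hvget a ha, hvget b hb] at h
    exact hnodup.getElem_inj_iff.mp h
  have htriple : ∀ k, k + 2 < l.length → ([v k, v (k+1), v (k+2)] <:+: l) := by
    intro k h
    refine ⟨l.take k, l.drop (k+3), ?_⟩
    have h1 : l.drop k = l[k] :: l.drop (k+1) := List.drop_eq_getElem_cons (by omega)
    have h2 : l.drop (k+1) = l[k+1] :: l.drop (k+2) := List.drop_eq_getElem_cons (by omega)
    have h3 : l.drop (k+2) = l[k+2] :: l.drop (k+3) := List.drop_eq_getElem_cons (by omega)
    conv_rhs => rw [← List.take_append_drop k l, h1, h2, h3]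
    rw [hvget k (by omega), hvget (k+1) (by omega), hvget (k+2) (by omega)]
    simp
  have hedge_rank : ∀ a b : Fin p, (a, b) ∈ G.edges → π.symm a < π.symm b :=
    fun a b h => htop (a, b) h
  have hS_rank : ∀ s ∈ S, π.symm s < j := by
    intro s hs
    rw [hSdef, Finset.mem_erase] at hs
    obtain ⟨-, hs⟩ := hs
    simp only [predSet, Finset.mem_image, Finset.mem_filter, Finset.mem_univ, true_and] at hs
    obtain ⟨m, hm, rfl⟩ := hs
    simpa using hm
  have hmemS : ∀ a : Fin p, π.symm a < j → a ≠ π i → a ∈ S := by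
    intro a h1 h2
    rw [hSdef, Finset.mem_erase]
    refine ⟨h2, Finset.mem_image.mpr ⟨π.symm a, Finset.mem_filter.mpr ⟨Finset.mem_univ _, h1⟩, by simp⟩⟩
  have hdesc : ∀ b s : Fin p, Relation.ReflTransGen G.edgeRel b s → π.symm b ≤ π.symm s := by
    intro b s h
    induction h with
    | refl => exact le_refl _
    | tail _ e ih => exact ih.trans (hedge_rank _ _ e).le
  have hanc : ∀ b : Fin p, G.ancestorOfSet b S → π.symm b < j := by
    rintro b ⟨s, hs, hrel⟩
    exact lt_of_le_of_lt (hdesc b s hrel) (hS_rank s hs)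
  have hcoll := fun k h => hconn (v k) (v (k+1)) (v (k+2)) (htriple k h)
  have haux : ∀ d, d < l.length →
      (∀ t, l.length - 1 - d ≤ t → t + 1 < l.length → (v (t+1), v t) ∈ G.edges) →
      j ≤ π.symm (v (l.length - 1 - d)) := by
    intro d
    induction d with
    | zero =>
      intro _ _
      simp only [Nat.sub_zero]
      rw [hvlast, Equiv.symm_apply_apply]
    | succ d ih =>
      intro hd hback
      have h1 : l.length - 1 - d = (l.length - 1 - (d+1)) + 1 := by omega
      have hedge := hback (l.length - 1 - (d+1)) le_rfl (by omega)
      have hlt := hedge_rank _ _ hedge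
      have hle := ih (by omega) (fun t ht h' => hback t (by omega) h')
      rw [h1] at hle
      exact hle.trans hlt.le
  by_cases hlast_edge : (v (l.length - 2), v (l.length - 1)) ∈ G.edges
  · -- last edge forward: v(N-2) is a non-collider in S
    set k := l.length - 3 with hk
    have e1 : k + 1 = l.length - 2 := by omega
    have e2 : k + 2 = l.length - 1 := by omega
    have h3 : k + 2 < l.length := by omega
    have hnc : ¬ G.isCollider (v k) (v (k+1)) (v (k+2)) := by
      rintro ⟨-, h⟩
      have h1 := hedge_rank _ _ h
      rw [e1, e2] at h1
      exact lt_asymm h1 (hedge_rank _ _ hlast_edge)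
    have hnotS := (hcoll k h3).2 hnc
    apply hnotS
    apply hmemS
    · have h1 := hedge_rank _ _ hlast_edge
      rw [hvlast, Equiv.symm_apply_apply] at h1
      rwa [e1]
    · intro h
      rw [← hv0] at h
      have := hne_idx _ _ (by omega) (by omega) h
      omega
  · have hlastb : (v (l.length - 1), v (l.length - 2)) ∈ G.edges := by
      have h := hadj (l.length - 2) (by omega)
      rw [show l.length - 2 + 1 = l.length - 1 from by omega] at h
      rcases h with h | h
      · exact absurd h hlast_edge
      · exact h
    by_cases hKne : ∃ t, t < l.length - 1 ∧ (v t, v (t+1)) ∈ G.edges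
    · obtain ⟨k, ⟨hk1, hkE⟩, hkmax⟩ :
          ∃ k, (k < l.length - 1 ∧ (v k, v (k+1)) ∈ G.edges) ∧
            ∀ t, t < l.length - 1 → (v t, v (t+1)) ∈ G.edges → t ≤ k := by
        obtain ⟨t0, ht0⟩ := hKne
        have hne : ((Finset.range (l.length - 1)).filter
            (fun k => (v k, v (k+1)) ∈ G.edges)).Nonempty :=
          ⟨t0, Finset.mem_filter.mpr ⟨Finset.mem_range.mpr ht0.1, ht0.2⟩⟩
        refine ⟨Finset.max' _ hne, ?_, ?_⟩
        · have := Finset.max'_mem _ hne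
          rw [Finset.mem_filter, Finset.mem_range] at this
          exact this
        · intro t h1 h2
          exact Finset.le_max' _ t (Finset.mem_filter.mpr ⟨Finset.mem_range.mpr h1, h2⟩)
      have hkne2 : k ≠ l.length - 2 := by
        intro h
        rw [h, show l.length - 2 + 1 = l.length - 1 from by omega] at hkE
        exact hlast_edge hkE
      have hklt : k < l.length - 2 := by omega
      have hback : ∀ t, k + 1 ≤ t → t + 1 < l.length → (v (t+1), v t) ∈ G.edges := by
        intro t ht h1
        rcases hadj t h1 with h | h
        · have := hkmax t (by omega) h; omega
        · exact h
      have hcolk : G.isCollider (v k) (v (k+1)) (v (k+2)) :=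
        ⟨hkE, hback (k+1) (by omega) (by omega)⟩
      have hancs := (hcoll k (by omega)).1 hcolk
      have hlt := hanc _ hancs
      have hge := haux (l.length - 1 - (k+1)) (by omega) (fun t ht h' => hback t (by omega) h')
      rw [show l.length - 1 - (l.length - 1 - (k+1)) = k + 1 from by omega] at hge
      exact absurd hlt (not_lt.mpr hge)
    · have hback : ∀ t, t + 1 < l.length → (v (t+1), v t) ∈ G.edges := by
        intro t h1
        rcases hadj t h1 with h | h
        · exact absurd ⟨t, by omega, h⟩ hKne
        · exact h
      have hge := haux (l.length - 1) (by omega) (fun t ht h' => hback t h')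
      rw [show l.length - 1 - (l.length - 1) = 0 from by omega, hv0, Equiv.symm_apply_apply] at hge
      exact absurd hij (not_lt.mpr hge)
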